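/- Let T > 0, s > 0, 0 ≤ t ≤ T, and x ∈ ℝ. Consider Lebesgue-measurable controls u : [t, T] → {−1, 0, 1} and define the payoff J(u) := (x + ∫ₜᵀ u(r) dr)² − ∫ₜᵀ κ(u(r)) dr, where κ(0) = s/2 and κ(−1) = κ(1) = s. Then the supremum of J(u) over all such controls equals v(t,x) := x² − s(T−t)/2 if |x| + (T−t)/2 ≤ s/4, and v(t,x) := (|x| + (T−t))² − s(T−t) if |x| + (T−t)/2 > s/4. -/

import Mathlib

open intervalIntegral MeasureTheory

set_option maxHeartbeats 1000000 in
/-- the value of the deterministic control problem of Example 4.1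
(zero-volatility limit): controls take values in {−1, 0, 1}, the payoff is
`(x + ∫ₜᵀ u)² − ∫ₜᵀ κ(u)` with running cost `κ(0) = s/2`, `κ(±1) = s`, and the
supremum over all measurable controls equals the dynamic price function `v(t,x)`. -/
theorem example_dynamic_control_value
    (T s : ℝ) (hT : 0 < T) (hs : 0 < s)
    (t x : ℝ) (ht0 : 0 ≤ t) (htT : t ≤ T) :
    sSup {y : ℝ | ∃ u : ℝ → ℝ, Measurable u ∧
        (∀ r : ℝ, t ≤ r → r ≤ T → (u r = -1 ∨ u r = 0 ∨ u r = 1)) ∧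
        y = (x + ∫ r in t..T, u r) ^ 2 - ∫ r in t..T, (if u r = 0 then s / 2 else s)}
      = if |x| + (T - t) / 2 ≤ s / 4 then x ^ 2 - s * (T - t) / 2
        else (|x| + (T - t)) ^ 2 - s * (T - t) := by
  have htau : 0 ≤ T - t := by linarith
  have hxabs : 0 ≤ |x| := abs_nonneg x
  apply IsGreatest.csSup_eq
  constructor
  · -- membership
    split_ifs with hcond
    · refine ⟨fun _ => 0, measurable_const, fun r _ _ => Or.inr (Or.inl rfl), ?_⟩
      simp [intervalIntegral.integral_const]
      ring
    · by_cases hx : 0 ≤ x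
      · refine ⟨fun _ => 1, measurable_const, fun r _ _ => Or.inr (Or.inr rfl), ?_⟩
        simp [intervalIntegral.integral_const, abs_of_nonneg hx]
        ring
      · refine ⟨fun _ => -1, measurable_const, fun r _ _ => Or.inl rfl, ?_⟩
        simp [intervalIntegral.integral_const, abs_of_neg (lt_of_not_ge hx)]
        ring
  · rintro y ⟨u, hu, hval, rfl⟩
    -- basic integrability
    have hmemIcc : ∀ r ∈ Set.Icc t T, u r = -1 ∨ u r = 0 ∨ u r = 1 :=
      fun r hr => hval r hr.1 hr.2
    have hbound : ∀ r ∈ Set.Icc t T, |u r| ≤ 1 := by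
      intro r hr
      rcases hmemIcc r hr with h | h | h <;> rw [h] <;> norm_num
    have hconst : IntervalIntegrable (fun _ : ℝ => (1:ℝ)) volume t T :=
      intervalIntegrable_const
    have hu_int : IntervalIntegrable u volume t T := by
      rw [intervalIntegrable_iff_integrableOn_Ioc_of_le htT]
      refine Integrable.mono'
        ((integrableOn_const_iff (C := (1:ℝ))).mpr (Or.inr measure_Ioc_lt_top))
        hu.aestronglyMeasurable.restrict ?_
      · filter_upwards [ae_restrict_mem measurableSet_Ioc] with r hr
        exact hbound r ⟨le_of_lt hr.1, hr.2⟩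
    have husq_int : IntervalIntegrable (fun r => (u r) ^ 2) volume t T := by
      rw [intervalIntegrable_iff_integrableOn_Ioc_of_le htT]
      refine Integrable.mono'
        ((integrableOn_const_iff (C := (1:ℝ))).mpr (Or.inr measure_Ioc_lt_top))
        ((hu.pow_const 2).aestronglyMeasurable.restrict) ?_
      filter_upwards [ae_restrict_mem measurableSet_Ioc] with r hr
      have h1 := hbound r ⟨le_of_lt hr.1, hr.2⟩
      rw [Real.norm_eq_abs, abs_pow]
      nlinarith [abs_nonneg (u r)]
    have huabs_int : IntervalIntegrable (fun r => |u r|) volume t T := hu_int.abs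
    have hcost_int : IntervalIntegrable (fun r => if u r = 0 then s / 2 else s) volume t T := by
      rw [intervalIntegrable_iff_integrableOn_Ioc_of_le htT]
      refine Integrable.mono'
        ((integrableOn_const_iff (C := s)).mpr (Or.inr measure_Ioc_lt_top)) ?_ ?_
      · exact (Measurable.ite (hu (measurableSet_singleton 0)) measurable_const
          measurable_const).aestronglyMeasurable.restrict
      · filter_upwards with r
        by_cases h : u r = 0 <;> simp [h, Real.norm_eq_abs, abs_of_nonneg, hs.le,
          abs_of_nonneg (by linarith : (0:ℝ) ≤ s/2)]
    set I := ∫ r in t..T, u r with hI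
    set q := ∫ r in t..T, (u r) ^ 2 with hq
    -- q bounds
    have hq0 : 0 ≤ q := by
      apply intervalIntegral.integral_nonneg htT
      intro r _; positivity
    have hqT : q ≤ T - t := by
      have := intervalIntegral.integral_mono_on htT husq_int hconst
        (fun r hr => by nlinarith [hbound r hr, abs_nonneg (u r), sq_abs (u r)])
      simpa [intervalIntegral.integral_const] using this
    -- |I| ≤ q
    have hIq : |I| ≤ q := by
      calc |I| ≤ ∫ r in t..T, |u r| := intervalIntegral.abs_integral_le_integral_abs htT
        _ = q := by
          apply intervalIntegral.integral_congr
          intro r hr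
          rw [Set.uIcc_of_le htT] at hr
          rcases hmemIcc r hr with h | h | h <;> simp only [] <;> norm_num [h]
    -- cost identity
    have hcost : (∫ r in t..T, (if u r = 0 then s / 2 else s))
        = s / 2 * (T - t) + s / 2 * q := by
      have heq : (∫ r in t..T, (if u r = 0 then s / 2 else s))
          = ∫ r in t..T, (s / 2 + s / 2 * (u r) ^ 2) := by
        apply intervalIntegral.integral_congr
        intro r hr
        rw [Set.uIcc_of_le htT] at hr
        rcases hmemIcc r hr with h | h | h <;> simp only [] <;> norm_num [h]
      rw [heq, intervalIntegral.integral_add intervalIntegrable_const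
        (husq_int.const_mul _), intervalIntegral.integral_const_mul,
        intervalIntegral.integral_const, smul_eq_mul, ← hq]
      ring
    rw [hcost]
    -- (x+I)^2 ≤ (|x|+q)^2
    have hsq : (x + I) ^ 2 ≤ (|x| + q) ^ 2 := by
      have h1 : |x + I| ≤ |x| + q := (abs_add_le x I).trans (by linarith)
      nlinarith [abs_nonneg (x + I), sq_abs (x + I)]
    -- combine
    by_cases hcase : 2 * |x| + q ≤ s / 2
    · have hA : (x + I) ^ 2 - (s / 2 * (T - t) + s / 2 * q)
          ≤ x ^ 2 - s * (T - t) / 2 := by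
        nlinarith [sq_abs x]
      split_ifs with hcond
      · exact hA
      · push_neg at hcond
        nlinarith [sq_abs x]
    · push_neg at hcase
      have hB : (x + I) ^ 2 - (s / 2 * (T - t) + s / 2 * q)
          ≤ (|x| + (T - t)) ^ 2 - s * (T - t) := by
        nlinarith
      split_ifs with hcond
      · nlinarith
      · exact hB
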